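/- arXiv:2401.11495 — 2 statements merged into one kernel-verified Lean document; each statement's English description precedes it below -/
import Mathlib

section
/- Let φ(s) := (1+s)^{-3/2} · (2 + log(1+s))^{-1} for s ≥ 0. Then ∫₀^∞ √s · φ(s) ds = ∞, while Ψ₁(t)/√t → 0 as t → ∞, where Ψ₁(t) := ∫₀^t s φ(s) ds. In particular the condition Ψ₁(t)/√t → 0 is strictly weaker than the moment condition ∫₀^∞ √t φ(t)dt < ∞. -/
open MeasureTheory Real Filter Set

private lemma aux_log_pos {s : ℝ} (hs : 0 ≤ s) : 0 < 2 + Real.log (1+s) := by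
  have : 0 ≤ Real.log (1+s) := Real.log_nonneg (by linarith)
  linarith

private lemma aux_cont : ContinuousOn
    (fun s : ℝ => (1+s) ^ (-(3/2) : ℝ) * (2 + Real.log (1+s))⁻¹) (Set.Ici 0) := by
  apply ContinuousOn.mul
  · apply ContinuousOn.rpow_const (by fun_prop)
    intro x hx
    exact Or.inl (by simp only [mem_Ici] at hx; positivity)
  · apply ContinuousOn.inv₀
    · exact (continuous_const.continuousOn).add
        (ContinuousOn.log (by fun_prop) (fun x hx => by simp only [mem_Ici] at hx; positivity))
    · intro x hx
      exact (aux_log_pos hx).ne'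

private lemma aux_nonneg {s : ℝ} (hs : 0 ≤ s) :
    0 ≤ (1+s) ^ (-(3/2) : ℝ) * (2 + Real.log (1+s))⁻¹ := by
  have h1 : (0:ℝ) ≤ (1+s) ^ (-(3/2) : ℝ) := Real.rpow_nonneg (by linarith) _
  have h2 := aux_log_pos hs
  positivity

/-- antiderivative computation for the tail bound -/
private lemma aux_sqrt_integral {K t : ℝ} (hK : 0 ≤ K) (hKt : K ≤ t) :
    ∫ s in K..t, (1+s) ^ (-(1/2) : ℝ) = 2 * Real.sqrt (1+t) - 2 * Real.sqrt (1+K) := by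
  have h : ∀ s ∈ Set.uIcc K t, HasDerivAt (fun s => 2 * Real.sqrt (1+s))
      ((1+s) ^ (-(1/2) : ℝ)) s := by
    intro s hs
    rw [Set.uIcc_of_le hKt] at hs
    have hs0 : 0 ≤ s := hK.trans hs.1
    have hpos : (0:ℝ) < 1 + s := by linarith
    have h1 : HasDerivAt (fun s : ℝ => 1 + s) 1 s := (hasDerivAt_id s).const_add 1
    have h2 : HasDerivAt (fun s : ℝ => Real.sqrt (1+s)) (1 / (2 * Real.sqrt (1+s)) * 1) s :=
      (Real.hasDerivAt_sqrt hpos.ne').comp s h1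
    have h3 := h2.const_mul 2
    refine h3.congr_deriv (Eq.symm ?_)
    rw [Real.rpow_neg hpos.le, ← Real.sqrt_eq_rpow]
    have hsq : (0:ℝ) < Real.sqrt (1+s) := Real.sqrt_pos.2 hpos
    field_simp
  have hint : IntervalIntegrable (fun s : ℝ => (1+s) ^ (-(1/2) : ℝ)) volume K t := by
    apply ContinuousOn.intervalIntegrable
    apply ContinuousOn.rpow_const (by fun_prop)
    intro x hx
    rw [Set.uIcc_of_le hKt] at hx
    exact Or.inl (by have := hK.trans hx.1; positivity)
  rw [intervalIntegral.integral_eq_sub_of_hasDerivAt h hint]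

private lemma aux_tail {K t : ℝ} (hK : 0 ≤ K) (hKt : K ≤ t) :
    ∫ s in K..t, s * ((1+s) ^ (-(3/2) : ℝ) * (2 + Real.log (1+s))⁻¹)
      ≤ 2 * Real.sqrt (1+t) * (2 + Real.log (1+K))⁻¹ := by
  have hsub : Set.uIcc K t ⊆ Set.Ici 0 := by
    rw [Set.uIcc_of_le hKt]; exact fun x hx => hK.trans hx.1
  have hint1 : IntervalIntegrable
      (fun s : ℝ => s * ((1+s) ^ (-(3/2) : ℝ) * (2 + Real.log (1+s))⁻¹)) volume K t :=
    (continuousOn_id.mul (aux_cont.mono hsub)).intervalIntegrable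
  have hint2 : IntervalIntegrable
      (fun s : ℝ => (1+s) ^ (-(1/2) : ℝ) * (2 + Real.log (1+K))⁻¹) volume K t := by
    apply ContinuousOn.intervalIntegrable
    apply ContinuousOn.mul _ continuousOn_const
    apply ContinuousOn.rpow_const (by fun_prop)
    intro x hx
    exact Or.inl (by have := hsub hx; simp only [mem_Ici] at this; positivity)
  have hmono : ∫ s in K..t, s * ((1+s) ^ (-(3/2) : ℝ) * (2 + Real.log (1+s))⁻¹)
      ≤ ∫ s in K..t, (1+s) ^ (-(1/2) : ℝ) * (2 + Real.log (1+K))⁻¹ := by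
    apply intervalIntegral.integral_mono_on hKt hint1 hint2
    intro s hs
    have hKs : K ≤ s := hs.1
    have hs0 : 0 ≤ s := hK.trans hKs
    have hpos : (0:ℝ) < 1 + s := by linarith
    have h32 : (0:ℝ) ≤ (1+s) ^ (-(3/2) : ℝ) := Real.rpow_nonneg hpos.le _
    have hA : s * (1+s) ^ (-(3/2) : ℝ) ≤ (1+s) ^ (-(1/2) : ℝ) := by
      have : s * (1+s) ^ (-(3/2) : ℝ) ≤ (1+s) * (1+s) ^ (-(3/2) : ℝ) :=
        mul_le_mul_of_nonneg_right (by linarith) h32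
      calc s * (1+s) ^ (-(3/2) : ℝ) ≤ (1+s) * (1+s) ^ (-(3/2) : ℝ) := this
        _ = (1+s) ^ (-(1/2) : ℝ) := by
            nth_rewrite 1 [← Real.rpow_one (1+s)]
            rw [← Real.rpow_add hpos]
            norm_num
    have hB : (2 + Real.log (1+s))⁻¹ ≤ (2 + Real.log (1+K))⁻¹ := by
      apply inv_anti₀ (aux_log_pos hK)
      have : Real.log (1+K) ≤ Real.log (1+s) := Real.log_le_log (by linarith) (by linarith)
      linarith
    calc s * ((1+s) ^ (-(3/2) : ℝ) * (2 + Real.log (1+s))⁻¹)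
        = (s * (1+s) ^ (-(3/2) : ℝ)) * (2 + Real.log (1+s))⁻¹ := by ring
      _ ≤ (1+s) ^ (-(1/2) : ℝ) * (2 + Real.log (1+K))⁻¹ := by
          apply mul_le_mul hA hB (le_of_lt (inv_pos.2 (aux_log_pos hs0)))
            (Real.rpow_nonneg hpos.le _)
  calc ∫ s in K..t, s * ((1+s) ^ (-(3/2) : ℝ) * (2 + Real.log (1+s))⁻¹)
      ≤ ∫ s in K..t, (1+s) ^ (-(1/2) : ℝ) * (2 + Real.log (1+K))⁻¹ := hmono
    _ = (2 * Real.sqrt (1+t) - 2 * Real.sqrt (1+K)) * (2 + Real.log (1+K))⁻¹ := by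
        rw [intervalIntegral.integral_mul_const, aux_sqrt_integral hK hKt]
    _ ≤ 2 * Real.sqrt (1+t) * (2 + Real.log (1+K))⁻¹ := by
        apply mul_le_mul_of_nonneg_right _ (le_of_lt (inv_pos.2 (aux_log_pos hK)))
        have := Real.sqrt_nonneg (1+K)
        linarith

/-- For `φ(s) = (1+s)^{-3/2}(2+log(1+s))^{-1}` the half-moment `∫₀^∞ √s φ(s)ds`
diverges, while `Ψ₁(t)/√t → 0` as `t → ∞`, where `Ψ₁(t) = ∫₀^t sφ(s)ds`. -/
theorem counterexample_half_moment :
    (¬ IntegrableOn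
        (fun s => Real.sqrt s * ((1+s) ^ (-(3/2) : ℝ) * (2 + Real.log (1+s))⁻¹))
        (Set.Ioi 0))
    ∧ Tendsto
        (fun t => (∫ s in (0:ℝ)..t, s * ((1+s) ^ (-(3/2) : ℝ) * (2 + Real.log (1+s))⁻¹))
          / Real.sqrt t)
        atTop (nhds 0) := by
  constructor
  · -- Part 1 : divergence
    intro h
    set f : ℝ → ℝ := fun s => Real.sqrt s * ((1+s) ^ (-(3/2) : ℝ) * (2 + Real.log (1+s))⁻¹)
      with hf
    set g : ℝ → ℝ := fun s => (1+s)⁻¹ * (2 + Real.log (1+s))⁻¹ with hg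
    have hgcont : ContinuousOn g (Set.Ici 1) := by
      apply ContinuousOn.mul
      · exact ContinuousOn.inv₀ (by fun_prop)
          (fun x hx => by simp only [mem_Ici] at hx; positivity)
      · apply ContinuousOn.inv₀
        · exact (continuous_const.continuousOn).add
            (ContinuousOn.log (by fun_prop)
              (fun x hx => by simp only [mem_Ici] at hx; positivity))
        · intro x hx
          simp only [mem_Ici] at hx
          exact (aux_log_pos (by linarith : (0:ℝ) ≤ x)).ne'
    have hgnn : ∀ s ∈ Set.Ioi (1:ℝ), 0 ≤ g s := by
      intro s hs
      simp only [mem_Ioi] at hs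
      have h1 : (0:ℝ) < 1 + s := by linarith
      have h2 := aux_log_pos (by linarith : (0:ℝ) ≤ s)
      positivity
    -- g is integrable on Ioi 1 by comparison with √2 * f
    have hgint : IntegrableOn g (Set.Ioi 1) := by
      have h2 : IntegrableOn (fun s => Real.sqrt 2 * f s) (Set.Ioi 1) :=
        (h.mono_set (Set.Ioi_subset_Ioi (by norm_num))).const_mul _
      apply Integrable.mono h2
        ((hgcont.mono Set.Ioi_subset_Ici_self).aestronglyMeasurable measurableSet_Ioi)
      filter_upwards [ae_restrict_mem measurableSet_Ioi] with s hs
      simp only [mem_Ioi] at hs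
      have hs0 : (0:ℝ) ≤ s := by linarith
      have hpos : (0:ℝ) < 1 + s := by linarith
      have hY : (0:ℝ) < (2 + Real.log (1+s))⁻¹ := inv_pos.2 (aux_log_pos hs0)
      have key : g s ≤ Real.sqrt 2 * f s := by
        have h1 : Real.sqrt (1+s) ≤ Real.sqrt 2 * Real.sqrt s := by
          rw [← Real.sqrt_mul (by norm_num)]
          exact Real.sqrt_le_sqrt (by linarith)
        have h2 : Real.sqrt (1+s) * (1+s) ^ (-(3/2) : ℝ) = (1+s)⁻¹ := by
          rw [Real.sqrt_eq_rpow, ← Real.rpow_add hpos]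
          norm_num
          rw [Real.rpow_neg hpos.le, Real.rpow_one]
        have h32 : (0:ℝ) ≤ (1+s) ^ (-(3/2) : ℝ) := Real.rpow_nonneg hpos.le _
        calc g s = (Real.sqrt (1+s) * (1+s) ^ (-(3/2) : ℝ)) * (2 + Real.log (1+s))⁻¹ := by
              rw [h2]
          _ ≤ (Real.sqrt 2 * Real.sqrt s * (1+s) ^ (-(3/2) : ℝ)) * (2 + Real.log (1+s))⁻¹ := by
              apply mul_le_mul_of_nonneg_right (mul_le_mul_of_nonneg_right h1 h32) hY.le
          _ = Real.sqrt 2 * f s := by rw [hf]; ring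
      have hgs : 0 ≤ g s := hgnn s hs
      rw [Real.norm_eq_abs, Real.norm_eq_abs, abs_of_nonneg hgs]
      exact key.trans (le_abs_self _)
    set M := ∫ s in Set.Ioi (1:ℝ), g s with hM
    -- FTC: for t ≥ 1, ∫ 1..t g = log(2+log(1+t)) - log(2+log 2)
    have hFTC : ∀ t : ℝ, 1 ≤ t →
        ∫ s in (1:ℝ)..t, g s
          = Real.log (2 + Real.log (1+t)) - Real.log (2 + Real.log 2) := by
      intro t ht
      have hder : ∀ s ∈ Set.uIcc (1:ℝ) t,
          HasDerivAt (fun s => Real.log (2 + Real.log (1+s))) (g s) s := by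
        intro s hs
        rw [Set.uIcc_of_le ht] at hs
        have hs1 : (1:ℝ) ≤ s := hs.1
        have hpos : (0:ℝ) < 1 + s := by linarith
        have h2pos := aux_log_pos (by linarith : (0:ℝ) ≤ s)
        have hin : HasDerivAt (fun s : ℝ => 2 + Real.log (1+s)) ((1+s)⁻¹ * 1) s :=
          (((Real.hasDerivAt_log hpos.ne').comp s
            ((hasDerivAt_id s).const_add 1))).const_add 2
        have hout := (Real.hasDerivAt_log h2pos.ne').comp s hin
        refine hout.congr_deriv (Eq.symm ?_)
        rw [hg]
        ring
      have hgi : IntervalIntegrable g volume 1 t := by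
        apply ContinuousOn.intervalIntegrable
        apply hgcont.mono
        rw [Set.uIcc_of_le ht]
        exact fun x hx => hx.1
      rw [intervalIntegral.integral_eq_sub_of_hasDerivAt hder hgi]
      norm_num
    -- bound: ∫ 1..t g ≤ M for all t ≥ 1
    have hbound : ∀ t : ℝ, 1 ≤ t → ∫ s in (1:ℝ)..t, g s ≤ M := by
      intro t ht
      rw [intervalIntegral.integral_of_le ht]
      apply setIntegral_mono_set hgint
      · filter_upwards [ae_restrict_mem measurableSet_Ioi] with s hs using hgnn s hs
      · exact HasSubset.Subset.eventuallyLE Set.Ioc_subset_Ioi_self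
    -- but the left side tends to ∞
    have htend : Tendsto (fun t : ℝ => Real.log (2 + Real.log (1+t))) atTop atTop := by
      apply Real.tendsto_log_atTop.comp
      apply tendsto_atTop_add_const_left
      apply Real.tendsto_log_atTop.comp
      exact tendsto_atTop_add_const_left _ _ tendsto_id
    obtain ⟨t, ht1, ht2⟩ : ∃ t : ℝ, 1 ≤ t ∧
        M + Real.log (2 + Real.log 2) < Real.log (2 + Real.log (1+t)) := by
      have := (htend.eventually_gt_atTop (M + Real.log (2 + Real.log 2))).and
        (eventually_ge_atTop (1:ℝ))
      obtain ⟨t, h1, h2⟩ := this.exists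
      exact ⟨t, h2, h1⟩
    have := hbound t ht1
    rw [hFTC t ht1] at this
    linarith
  · -- Part 2 : Ψ₁(t)/√t → 0
    rw [Metric.tendsto_atTop]
    intro ε hε
    set K := Real.exp (8/ε) with hKdef
    have hK1 : (1:ℝ) ≤ K := Real.one_le_exp (by positivity)
    have hK0 : (0:ℝ) ≤ K := by linarith
    have hlogK : 8/ε ≤ Real.log (1+K) := by
      calc 8/ε = Real.log K := (Real.log_exp _).symm
        _ ≤ Real.log (1+K) := Real.log_le_log (Real.exp_pos _) (by linarith)
    have hinvK : (2 + Real.log (1+K))⁻¹ ≤ ε/8 := by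
      have h8 : (0:ℝ) < 8/ε := by positivity
      have : (2 + Real.log (1+K))⁻¹ ≤ (8/ε)⁻¹ := inv_anti₀ h8 (by linarith)
      calc (2 + Real.log (1+K))⁻¹ ≤ (8/ε)⁻¹ := this
        _ = ε/8 := by field_simp
    set C := ∫ s in (0:ℝ)..K, s * ((1+s) ^ (-(3/2) : ℝ) * (2 + Real.log (1+s))⁻¹) with hC
    have hC0 : 0 ≤ C := by
      rw [hC]
      apply intervalIntegral.integral_nonneg hK0
      intro s hs
      exact mul_nonneg hs.1 (aux_nonneg hs.1)
    refine ⟨max K ((2*C/ε + 1)^2), fun t ht => ?_⟩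
    have htK : K ≤ t := le_trans (le_max_left _ _) ht
    have ht1 : (1:ℝ) ≤ t := hK1.trans htK
    have ht0 : (0:ℝ) < t := by linarith
    have hst : (0:ℝ) < Real.sqrt t := Real.sqrt_pos.2 ht0
    have hstge : 2*C/ε + 1 ≤ Real.sqrt t := by
      have h1 : (0:ℝ) ≤ 2*C/ε + 1 := by positivity
      calc 2*C/ε + 1 = Real.sqrt ((2*C/ε + 1)^2) := by rw [Real.sqrt_sq h1]
        _ ≤ Real.sqrt t := Real.sqrt_le_sqrt (le_trans (le_max_right _ _) ht)
    -- split the integral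
    have hsplit : (∫ s in (0:ℝ)..t, s * ((1+s) ^ (-(3/2) : ℝ) * (2 + Real.log (1+s))⁻¹))
        = C + ∫ s in K..t, s * ((1+s) ^ (-(3/2) : ℝ) * (2 + Real.log (1+s))⁻¹) := by
      rw [hC]
      rw [intervalIntegral.integral_add_adjacent_intervals]
      · apply ContinuousOn.intervalIntegrable
        apply (continuousOn_id.mul aux_cont).mono
        rw [Set.uIcc_of_le hK0]
        exact fun x hx => hx.1
      · apply ContinuousOn.intervalIntegrable
        apply (continuousOn_id.mul aux_cont).mono
        rw [Set.uIcc_of_le htK]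
        exact fun x hx => hK0.trans hx.1
    have htail := aux_tail hK0 htK
    have hsqrt1t : Real.sqrt (1+t) ≤ 2 * Real.sqrt t := by
      calc Real.sqrt (1+t) ≤ Real.sqrt (4*t) := Real.sqrt_le_sqrt (by linarith)
        _ = 2 * Real.sqrt t := by
            rw [show (4:ℝ)*t = 2^2*t by ring, Real.sqrt_mul (by positivity), Real.sqrt_sq
              (by norm_num)]
    have htail2 : (∫ s in K..t, s * ((1+s) ^ (-(3/2) : ℝ) * (2 + Real.log (1+s))⁻¹))
        ≤ ε/2 * Real.sqrt t := by
      calc (∫ s in K..t, s * ((1+s) ^ (-(3/2) : ℝ) * (2 + Real.log (1+s))⁻¹))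
          ≤ 2 * Real.sqrt (1+t) * (2 + Real.log (1+K))⁻¹ := htail
        _ ≤ 2 * (2 * Real.sqrt t) * (ε/8) := by
            apply mul_le_mul (by linarith) hinvK
              (le_of_lt (inv_pos.2 (aux_log_pos hK0))) (by positivity)
        _ = ε/2 * Real.sqrt t := by ring
    have hΨnn : 0 ≤ ∫ s in (0:ℝ)..t, s * ((1+s) ^ (-(3/2) : ℝ) * (2 + Real.log (1+s))⁻¹) := by
      apply intervalIntegral.integral_nonneg ht0.le
      intro s hs
      exact mul_nonneg hs.1 (aux_nonneg hs.1)
    rw [Real.dist_eq, sub_zero, abs_of_nonneg (div_nonneg hΨnn hst.le)]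
    rw [hsplit]
    rw [div_lt_iff₀ hst]
    have hCbound : C < ε/2 * Real.sqrt t := by
      have h1 : ε/2 * (2*C/ε + 1) = C + ε/2 := by field_simp
      nlinarith [mul_le_mul_of_nonneg_left hstge (le_of_lt (half_pos hε))]
    nlinarith [htail2]
end

section
/- Let σ > 0, w a finite complex measure on ℝ₊ with Re values in (−∞,0], and g : ℝ₊ → iℝ locally bounded. If V* solves the Riccati-type integral equation V*(t) = 𝓘_w(t)/σ + (1/(2σ))∫₀^t (V*(s)+g(s))² ds with w a nonpositive real measure and g ≡ 0, then 𝓘_w(t)/σ ≤ V*(t) ≤ 0 for all t ≥ 0, where 𝓘_w(t) := w([0,t]). -/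
open MeasureTheory Real Filter Set Topology

/-- For a nonpositive measure `w = -μ` (with `μ` a finite measure) and the Riccati
equation `V(t) = 𝓘_w(t)/σ + (1/(2σ))∫₀^t V(s)²ds` (case `g ≡ 0`), the solution
satisfies `𝓘_w(t)/σ ≤ V(t) ≤ 0` for all `t ≥ 0`, where `𝓘_w(t) = w([0,t])`. -/
theorem riccati_solution_bounds
    (σ : ℝ) (hσ : 0 < σ)
    (μ : Measure ℝ) [IsFiniteMeasure μ]
    (V : ℝ → ℝ) (hV : Continuous V)
    (heq : ∀ t ≥ (0:ℝ),
      V t = (-(μ (Set.Icc 0 t)).toReal) / σ + (1/(2*σ)) * ∫ s in (0:ℝ)..t, (V s)^2) :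
    ∀ t ≥ (0:ℝ), (-(μ (Set.Icc 0 t)).toReal) / σ ≤ V t ∧ V t ≤ 0 := by
  have hVsq : Continuous fun s => (V s)^2 := by continuity
  have hint : ∀ a b : ℝ, IntervalIntegrable (fun s => (V s)^2) volume a b :=
    fun a b => hVsq.intervalIntegrable a b
  have hintV : ∀ a b : ℝ, IntervalIntegrable V volume a b :=
    fun a b => hV.intervalIntegrable a b
  -- lower bound
  have hlow : ∀ t ≥ (0:ℝ), (-(μ (Set.Icc 0 t)).toReal) / σ ≤ V t := by
    intro t ht
    rw [heq t ht]
    have h1 : (0:ℝ) ≤ ∫ s in (0:ℝ)..t, (V s)^2 :=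
      intervalIntegral.integral_nonneg ht (fun s _ => sq_nonneg _)
    have h2 : (0:ℝ) < 1/(2*σ) := by positivity
    nlinarith
  -- upper bound
  have hup : ∀ t ≥ (0:ℝ), V t ≤ 0 := by
    intro t₁ ht₁
    by_contra hpos
    push_neg at hpos
    -- V 0 ≤ 0
    have hV0 : V 0 ≤ 0 := by
      have h := heq 0 le_rfl
      rw [intervalIntegral.integral_same] at h
      have hm : (0:ℝ) ≤ (μ (Set.Icc 0 (0:ℝ))).toReal := ENNReal.toReal_nonneg
      have : (-(μ (Set.Icc 0 (0:ℝ))).toReal) / σ ≤ 0 :=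
        div_nonpos_of_nonpos_of_nonneg (by linarith) hσ.le
      rw [h]; linarith
    -- last zero before t₁
    set S : Set ℝ := {s | s ∈ Set.Icc 0 t₁ ∧ V s ≤ 0} with hS
    have hSc : IsCompact S := by
      have : S = Set.Icc 0 t₁ ∩ V ⁻¹' (Set.Iic 0) := by
        ext s; simp [hS, Set.mem_Icc, and_comm]
      rw [this]
      exact isCompact_Icc.inter_right (isClosed_Iic.preimage hV)
    have hSne : S.Nonempty := ⟨0, ⟨le_rfl, ht₁⟩, hV0⟩
    set τ := sSup S with hτ
    have hτS : τ ∈ S := hSc.sSup_mem hSne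
    have hτ0 : (0:ℝ) ≤ τ := hτS.1.1
    have hτt₁ : τ ≤ t₁ := hτS.1.2
    have hVτle : V τ ≤ 0 := hτS.2
    have hτlt : τ < t₁ := lt_of_le_of_ne hτt₁ (by intro h; rw [h] at hVτle; linarith)
    have hposafter : ∀ s, τ < s → s ≤ t₁ → 0 < V s := by
      intro s hs1 hs2
      by_contra h
      push_neg at h
      have hsS : s ∈ S := ⟨⟨le_trans hτ0 hs1.le, hs2⟩, h⟩
      exact absurd (le_csSup hSc.bddAbove hsS) (not_le.2 hs1)
    -- V τ = 0
    have hVτ : V τ = 0 := by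
      refine le_antisymm hVτle ?_
      haveI hne : (𝓝[Set.Ioi τ] τ).NeBot := nhdsGT_neBot_of_exists_gt ⟨t₁, hτlt⟩
      refine ge_of_tendsto ((hV.tendsto τ).mono_left (nhdsWithin_le_nhds : 𝓝[Set.Ioi τ] τ ≤ 𝓝 τ)) ?_
      filter_upwards [Ioc_mem_nhdsGT_of_mem ⟨le_rfl, hτlt⟩] with s hs
      exact (hposafter s hs.1 hs.2).le
    -- V s ≥ 0 on [τ, t₁]
    have hVnn : ∀ s ∈ Set.Icc τ t₁, 0 ≤ V s := by
      intro s hs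
      rcases eq_or_lt_of_le hs.1 with rfl | h
      · exact hVτ.ge
      · exact (hposafter s h hs.2).le
    -- key inequality : V t ≤ (1/(2σ)) ∫_τ^t V²
    have key : ∀ t ∈ Set.Icc τ t₁, V t ≤ (1/(2*σ)) * ∫ s in τ..t, (V s)^2 := by
      intro t ht
      have ht0 : (0:ℝ) ≤ t := le_trans hτ0 ht.1
      have e1 := heq t ht0
      have e2 := heq τ hτ0
      have hsplit : (∫ s in (0:ℝ)..τ, (V s)^2) + (∫ s in τ..t, (V s)^2)
          = ∫ s in (0:ℝ)..t, (V s)^2 :=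
        intervalIntegral.integral_add_adjacent_intervals (hint 0 τ) (hint τ t)
      rw [← hsplit, mul_add] at e1
      have hmmono : (μ (Set.Icc 0 τ)).toReal ≤ (μ (Set.Icc 0 t)).toReal :=
        ENNReal.toReal_mono (measure_ne_top μ _)
          (measure_mono (Set.Icc_subset_Icc_right ht.1))
      have hdiff : (-(μ (Set.Icc 0 t)).toReal) / σ - (-(μ (Set.Icc 0 τ)).toReal) / σ ≤ 0 := by
        rw [div_sub_div_same]
        exact div_nonpos_of_nonpos_of_nonneg (by linarith) hσ.le
      linarith
    -- bound on V on [τ, t₁]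
    obtain ⟨C, hC⟩ := isCompact_Icc.exists_bound_of_continuousOn
      (hV.continuousOn : ContinuousOn V (Set.Icc τ t₁))
    set K : ℝ := C / (2*σ) with hK
    have hC0 : 0 ≤ C := le_trans (norm_nonneg _) (hC t₁ ⟨hτlt.le, le_rfl⟩)
    have hK0 : 0 ≤ K := by positivity
    -- V² ≤ C·V on [τ,t₁], hence refined key
    have key2 : ∀ t ∈ Set.Icc τ t₁, V t ≤ K * ∫ s in τ..t, V s := by
      intro t ht
      have hmono : (∫ s in τ..t, (V s)^2) ≤ ∫ s in τ..t, C * V s := by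
        refine intervalIntegral.integral_mono_on ht.1 (hint τ t)
          ((hintV τ t).const_mul C) ?_
        intro s hs
        have hs' : s ∈ Set.Icc τ t₁ := Set.Icc_subset_Icc_right ht.2 hs
        have h1 := hVnn s hs'
        have h2 : V s ≤ C := le_trans (le_abs_self _) (hC s hs')
        nlinarith
      have := key t ht
      rw [intervalIntegral.integral_const_mul] at hmono
      have h2σ : (0:ℝ) < 1/(2*σ) := by positivity
      have : V t ≤ (1/(2*σ)) * (C * ∫ s in τ..t, V s) := by nlinarith
      calc V t ≤ (1/(2*σ)) * (C * ∫ s in τ..t, V s) := this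
        _ = K * ∫ s in τ..t, V s := by rw [hK]; ring
    -- Gronwall on G(t) = ∫_τ^t V
    set G : ℝ → ℝ := fun t => ∫ s in τ..t, V s with hG
    have hG' : ∀ x : ℝ, HasDerivAt G (V x) x := fun x =>
      intervalIntegral.integral_hasDerivAt_right (hintV τ x)
        (hV.stronglyMeasurableAtFilter _ _) hV.continuousAt
    have hGcont : Continuous G := by
      rw [continuous_iff_continuousAt]
      exact fun x => (hG' x).continuousAt
    have hGnn : ∀ x ∈ Set.Icc τ t₁, 0 ≤ G x := by
      intro x hx
      exact intervalIntegral.integral_nonneg hx.1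
        (fun s hs => hVnn s ⟨hs.1, le_trans hs.2 hx.2⟩)
    have hbound : ∀ x ∈ Set.Ico τ t₁, ‖V x‖ ≤ K * ‖G x‖ + 0 := by
      intro x hx
      have hx' : x ∈ Set.Icc τ t₁ := ⟨hx.1, hx.2.le⟩
      rw [Real.norm_eq_abs, Real.norm_eq_abs, abs_of_nonneg (hVnn x hx'),
        abs_of_nonneg (hGnn x hx'), add_zero]
      exact key2 x hx'
    have hGτ : ‖G τ‖ ≤ 0 := by
      simp [hG, intervalIntegral.integral_same]
    have := norm_le_gronwallBound_of_norm_deriv_right_le hGcont.continuousOn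
      (fun x _ => (hG' x).hasDerivWithinAt) hGτ hbound t₁ ⟨hτlt.le, le_rfl⟩
    rw [gronwallBound_ε0_δ0] at this
    have hGt₁ : G t₁ = 0 := by
      have := norm_nonneg (G t₁); have h := abs_nonneg (G t₁)
      simpa [Real.norm_eq_abs, abs_eq_zero] using le_antisymm ‹‖G t₁‖ ≤ 0› (norm_nonneg _)
    have hfin := key2 t₁ ⟨hτlt.le, le_rfl⟩
    have hI : (∫ (s:ℝ) in τ..t₁, V s) = 0 := hGt₁
    rw [hI, mul_zero] at hfin
    linarith
  intro t ht
  exact ⟨hlow t ht, hup t ht⟩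
end
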